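/- Let n ≥ 1, fix x ∈ ℝⁿ and t ∈ [0,T], let σ be an n×n real matrix, f : ℝⁿ → ℝⁿ, and h̃ : ℝⁿ × ℝ → ℝ. For each 𝒯 > 0 let V̂_𝒯(x,t,·) : [t, t+𝒯] → ℝ be continuously differentiable in τ and satisfy the backward equation −∂_τ V̂_𝒯(x,t,τ) = (1/𝒯)·h̃(x, ρ̂_𝒯(x,t,τ)) + (∂_x V̂_𝒯(x,t,τ))ᵀ f(x) − (1/2)(∂_x V̂_𝒯(x,t,τ))ᵀ(∂_x V̂_𝒯(x,t,τ)) + (1/2)Tr(σσᵀ ∂_{xx} V̂_𝒯(x,t,τ)) with terminal condition V̂_𝒯(x,t,t+𝒯) = 0. Assume there is a constant M such that the combined non-cost terms |(∂_x V̂_𝒯)ᵀ f(x) − (1/2)(∂_x V̂_𝒯)ᵀ(∂_x V̂_𝒯) + (1/2)Tr(σσᵀ ∂_{xx} V̂_𝒯)| ≤ M uniformly in τ ∈ [t, t+𝒯] and in 𝒯, and that sup_{τ ∈ [t,t+𝒯]} |h̃(x, ρ̂_𝒯(x,t,τ)) − h̃(x, ρ(x,t))| → 0 as 𝒯 → 0⁺,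 where ρ̂_𝒯(x,t,t) = ρ(x,t). Then lim_{𝒯→0⁺} V̂_𝒯(x,t,t) = h̃(x, ρ(x,t)). -/

import Mathlib

open Filter Set Matrix

/-- The spatial gradient of `g : ℝⁿ → ℝ` at `x` (vector of partial derivatives). -/
noncomputable def sgrad {n : ℕ} (g : (Fin n → ℝ) → ℝ) (x : Fin n → ℝ) : Fin n → ℝ :=
  fun j => fderiv ℝ g x (Pi.single j 1)

/-- The spatial Hessian of `g : ℝⁿ → ℝ` at `x` (matrix of second partial derivatives). -/
noncomputable def shess {n : ℕ} (g : (Fin n → ℝ) → ℝ) (x : Fin n → ℝ) :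
    Matrix (Fin n) (Fin n) ℝ :=
  Matrix.of fun i j =>
    fderiv ℝ (fun y => fderiv ℝ g y (Pi.single j 1)) x (Pi.single i 1)

/-- The dot product on `ℝⁿ`. -/
noncomputable def dotp {n : ℕ} (a b : Fin n → ℝ) : ℝ := ∑ j, a j * b j

/-- for the value function `V̂_𝒯(x,t,·)` of the model predictive mean field
game with running cost `(1/𝒯)·h̃`, zero terminal value at `τ = t + 𝒯`, uniformly bounded
non-cost Hamiltonian terms, and predicted density `ρ̂_𝒯(x,t,τ)` whose cost
`h̃(x, ρ̂_𝒯(x,t,τ))` converges uniformly on the prediction window to `h̃(x, ρ(x,t))`,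
one has `lim_{𝒯→0⁺} V̂_𝒯(x,t,t) = h̃(x, ρ(x,t))`. -/
theorem mpmfg_value_function_limit
    (n : ℕ) (hn : 1 ≤ n) (T : ℝ) (x : Fin n → ℝ) (t : ℝ) (ht : t ∈ Icc 0 T)
    (σ : Matrix (Fin n) (Fin n) ℝ)
    (f : (Fin n → ℝ) → (Fin n → ℝ))
    (htilde : (Fin n → ℝ) × ℝ → ℝ)
    -- the value function `V̂_𝒯(y, τ)` (with the current time `t` fixed),
    -- its `τ`-derivative `V' 𝒯 τ` at the point `x`,
    -- and the predicted density `ρ̂_𝒯(τ)` at the point `x` (with `t` fixed)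
    (Vhat : ℝ → (Fin n → ℝ) → ℝ → ℝ) (V' : ℝ → ℝ → ℝ) (ρhat : ℝ → ℝ → ℝ)
    -- the observed density `ρ(x,t)`
    (ρxt : ℝ)
    -- `V̂_𝒯(x,t,·)` is continuously differentiable in `τ` on `[t, t+𝒯]`
    (hC1 : ∀ 𝒯 > (0 : ℝ), ∀ τ ∈ Icc t (t + 𝒯),
      HasDerivAt (fun s => Vhat 𝒯 x s) (V' 𝒯 τ) τ)
    (hC1' : ∀ 𝒯 > (0 : ℝ), ContinuousOn (V' 𝒯) (Icc t (t + 𝒯)))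
    -- the backward Hamilton–Jacobi–Bellman equation
    (hHJB : ∀ 𝒯 > (0 : ℝ), ∀ τ ∈ Icc t (t + 𝒯),
      -(V' 𝒯 τ) =
        (1 / 𝒯) * htilde (x, ρhat 𝒯 τ)
          + dotp (sgrad (fun y => Vhat 𝒯 y τ) x) (f x)
          - (1 / 2) * dotp (sgrad (fun y => Vhat 𝒯 y τ) x) (sgrad (fun y => Vhat 𝒯 y τ) x)
          + (1 / 2) * Matrix.trace (σ * σᵀ * shess (fun y => Vhat 𝒯 y τ) x))
    -- the terminal condition `V̂_𝒯(x,t,t+𝒯) = 0`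
    (hterm : ∀ 𝒯 > (0 : ℝ), Vhat 𝒯 x (t + 𝒯) = 0)
    -- the combined non-cost terms are uniformly bounded by `M`
    (M : ℝ)
    (hbound : ∀ 𝒯 > (0 : ℝ), ∀ τ ∈ Icc t (t + 𝒯),
      |dotp (sgrad (fun y => Vhat 𝒯 y τ) x) (f x)
          - (1 / 2) * dotp (sgrad (fun y => Vhat 𝒯 y τ) x) (sgrad (fun y => Vhat 𝒯 y τ) x)
          + (1 / 2) * Matrix.trace (σ * σᵀ * shess (fun y => Vhat 𝒯 y τ) x)| ≤ M)
    -- `sup_{τ ∈ [t,t+𝒯]} |h̃(x, ρ̂_𝒯(x,t,τ)) - h̃(x, ρ(x,t))| → 0` as `𝒯 → 0⁺`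
    (hconv : ∀ ε > (0 : ℝ), ∃ δ > (0 : ℝ), ∀ 𝒯, 0 < 𝒯 → 𝒯 < δ →
      ∀ τ ∈ Icc t (t + 𝒯), |htilde (x, ρhat 𝒯 τ) - htilde (x, ρxt)| ≤ ε)
    -- `ρ̂_𝒯(x,t,t) = ρ(x,t)`
    (hinit : ∀ 𝒯 > (0 : ℝ), ρhat 𝒯 t = ρxt) :
    Tendsto (fun 𝒯 => Vhat 𝒯 x t) (nhdsWithin 0 (Ioi 0)) (nhds (htilde (x, ρxt))) := by
  
  rw [Metric.tendsto_nhdsWithin_nhds]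
  intro ε hε
  obtain ⟨δ₁, hδ₁, hδ⟩ := hconv (ε/4) (by positivity)
  have hM0 : 0 ≤ M := le_trans (abs_nonneg _) (hbound 1 one_pos t ⟨le_refl _, by linarith⟩)
  refine ⟨min δ₁ (ε/(4*(M+1))), lt_min hδ₁ (by positivity), ?_⟩
  intro 𝒯 h𝒯 hdist
  rw [Real.dist_eq, sub_zero] at hdist
  have h𝒯pos : 0 < 𝒯 := h𝒯
  have h𝒯abs : 𝒯 < min δ₁ (ε/(4*(M+1))) := by rwa [abs_of_pos h𝒯pos] at hdist
  have h𝒯δ₁ : 𝒯 < δ₁ := lt_of_lt_of_le h𝒯abs (min_le_left _ _)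
  have h𝒯δ₂ : 𝒯 < ε/(4*(M+1)) := lt_of_lt_of_le h𝒯abs (min_le_right _ _)
  have hle : t ≤ t + 𝒯 := by linarith
  set c := htilde (x, ρxt) with hc
  -- FTC: ∫ V' = Vhat(t+𝒯) - Vhat(t) = - Vhat(t)
  have hint : IntervalIntegrable (V' 𝒯) MeasureTheory.volume t (t + 𝒯) := by
    apply ContinuousOn.intervalIntegrable
    rw [Set.uIcc_of_le hle]; exact hC1' 𝒯 h𝒯pos
  have hftc : ∫ τ in t..(t+𝒯), V' 𝒯 τ = Vhat 𝒯 x (t+𝒯) - Vhat 𝒯 x t := by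
    apply intervalIntegral.integral_eq_sub_of_hasDerivAt
    · intro τ hτ
      rw [Set.uIcc_of_le hle] at hτ
      exact hC1 𝒯 h𝒯pos τ hτ
    · exact hint
  have hV : Vhat 𝒯 x t = ∫ τ in t..(t+𝒯), -(V' 𝒯 τ) := by
    rw [intervalIntegral.integral_neg, hftc, hterm 𝒯 h𝒯pos]; ring
  -- the key bound
  have hdiff : Vhat 𝒯 x t - c = ∫ τ in t..(t+𝒯), (-(V' 𝒯 τ) - c/𝒯) := by
    have hint2 : IntervalIntegrable (fun τ => -(V' 𝒯 τ)) MeasureTheory.volume t (t+𝒯) :=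
      hint.neg
    rw [intervalIntegral.integral_sub hint2 (intervalIntegrable_const),
      intervalIntegral.integral_const, ← hV]
    have : (t + 𝒯 - t) • (c/𝒯) = c := by
      rw [smul_eq_mul]; field_simp; ring
    rw [this]
  have hbnd : |Vhat 𝒯 x t - c| ≤ (ε/4/𝒯 + M) * |t + 𝒯 - t| := by
    rw [hdiff, ← Real.norm_eq_abs]
    apply intervalIntegral.norm_integral_le_of_norm_le_const
    intro τ hτ
    rw [Set.uIoc_of_le hle] at hτ
    have hτ' : τ ∈ Icc t (t + 𝒯) := ⟨le_of_lt hτ.1, hτ.2⟩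
    have hhjb := hHJB 𝒯 h𝒯pos τ hτ'
    have heq : -(V' 𝒯 τ) - c/𝒯 =
        (1/𝒯) * (htilde (x, ρhat 𝒯 τ) - c)
        + (dotp (sgrad (fun y => Vhat 𝒯 y τ) x) (f x)
          - (1 / 2) * dotp (sgrad (fun y => Vhat 𝒯 y τ) x) (sgrad (fun y => Vhat 𝒯 y τ) x)
          + (1 / 2) * Matrix.trace (σ * σᵀ * shess (fun y => Vhat 𝒯 y τ) x)) := by
      rw [hhjb]; field_simp; ring
    rw [Real.norm_eq_abs, heq]
    calc |_| ≤ |(1/𝒯) * (htilde (x, ρhat 𝒯 τ) - c)| + _ := abs_add_le _ _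
      _ ≤ (1/𝒯) * (ε/4) + M := by
          gcongr
          · rw [abs_mul, abs_of_pos (by positivity : (0:ℝ) < 1/𝒯)]
            have := hδ 𝒯 h𝒯pos h𝒯δ₁ τ hτ'
            have h1 : (0:ℝ) < 1/𝒯 := by positivity
            nlinarith [abs_nonneg (htilde (x, ρhat 𝒯 τ) - c)]
          · exact hbound 𝒯 h𝒯pos τ hτ'
      _ = ε/4/𝒯 + M := by ring
  have habs : |t + 𝒯 - t| = 𝒯 := by rw [show t + 𝒯 - t = 𝒯 by ring, abs_of_pos h𝒯pos]
  rw [habs] at hbnd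
  have hfin : (ε/4/𝒯 + M) * 𝒯 = ε/4 + M * 𝒯 := by field_simp
  rw [hfin] at hbnd
  have : M * 𝒯 < ε/4 := by
    calc M * 𝒯 ≤ (M+1) * 𝒯 := by nlinarith
      _ < (M+1) * (ε/(4*(M+1))) := by
          apply mul_lt_mul_of_pos_left h𝒯δ₂ (by linarith)
      _ = ε/4 := by field_simp
  rw [Real.dist_eq]
  calc |Vhat 𝒯 x t - c| ≤ ε/4 + M * 𝒯 := hbnd
    _ < ε/4 + ε/4 := by linarith
    _ < ε := by linarith
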